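/- Let T ∈ B(H) be dissipative (Im(T) ≥ 0) with T⁻¹ ∈ B(H). Then the improper Riemann integral log(T) = −i ∫₀^∞ dλ ((T + iλ I_H)⁻¹ − (1 + iλ)⁻¹ I_H) converges in the operator norm of B(H), so log(T) ∈ B(H); moreover, if T = z I_H for some z ∈ ℂ₊, then log(T) = log(z) I_H, where log(z) is the principal branch of the complex logarithm (with argument in (0,π) on ℂ₊). -/

import Mathlib

open Complex Filter MeasureTheory TopologicalSpace ContinuousLinearMap
open scoped InnerProductSpace Topology

noncomputable section

namespace SpectralShift

variable {H : Type*} [NormedAddCommGroup H] [InnerProductSpace ℂ H] [CompleteSpace H]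

/-- The imaginary part `(T - T*)/(2i)` of a bounded operator. -/
def imPart (T : H →L[ℂ] H) : H →L[ℂ] H :=
  ((2 * Complex.I)⁻¹ : ℂ) • (T - ContinuousLinearMap.adjoint T)

/-- An operator-valued Herglotz function: analytic on the open upper half-plane with
nonnegative imaginary part there. -/
def IsHerglotz (M : ℂ → H →L[ℂ] H) : Prop :=
  DifferentiableOn ℂ M {z : ℂ | 0 < z.im} ∧ ∀ z : ℂ, 0 < z.im → (imPart (M z)).IsPositive

/-- The integrand `(T + iλ)⁻¹ - (1 + iλ)⁻¹ I` in the integral representation of `log T`. -/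
def logIntegrand (T : H →L[ℂ] H) (t : ℝ) : H →L[ℂ] H :=
  Ring.inverse (T + ((t : ℂ) * Complex.I) • (1 : H →L[ℂ] H)) -
    (((1 : ℂ) + (t : ℂ) * Complex.I)⁻¹) • (1 : H →L[ℂ] H)

/-- `log T = -i ∫₀^∞ ((T + iλ)⁻¹ - (1 + iλ)⁻¹ I) dλ` as a norm-convergent improper
Riemann integral, for a dissipative boundedly invertible `T`. -/
def opLog (T : H →L[ℂ] H) : H →L[ℂ] H :=
  limUnder atTop (fun R : ℝ => (-Complex.I) • ∫ t in (0:ℝ)..R, logIntegrand T t)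

/-- The logarithm `log S = (log S*)*` of an operator `S` with `-S` dissipative. -/
def opLogAnti (T : H →L[ℂ] H) : H →L[ℂ] H :=
  ContinuousLinearMap.adjoint (opLog (ContinuousLinearMap.adjoint T))

/-- The logarithm of a Herglotz-type operator family on `ℂ ∖ ℝ`, using `log T` in the
upper half-plane and the convention `log S = (log S*)*` in the lower half-plane. -/
def logHerg (Φ : ℂ → H →L[ℂ] H) (z : ℂ) : H →L[ℂ] H :=
  if 0 < z.im then opLog (Φ z) else opLogAnti (Φ z)

/-- The logarithm of an anti-Herglotz-type operator family on `ℂ ∖ ℝ` (nonpositive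
imaginary part in the upper half-plane). -/
def logAntiHerg (Φ : ℂ → H →L[ℂ] H) (z : ℂ) : H →L[ℂ] H :=
  if 0 < z.im then opLogAnti (Φ z) else opLog (Φ z)

/-- Trace class: absolute summability of the diagonal in every Hilbert basis. -/
def IsTraceClass (T : H →L[ℂ] H) : Prop :=
  ∀ (w : Set H) (b : HilbertBasis w ℂ H), Summable fun i => ‖⟪(b i : H), T (b i)⟫_ℂ‖

/-- The trace, computed in a fixed Hilbert basis (basis-independent for trace
class operators). -/
def trH (T : H →L[ℂ] H) : ℂ :=
  ∑' i, ⟪((exists_hilbertBasis ℂ H).choose_spec.choose i : H),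
    T ((exists_hilbertBasis ℂ H).choose_spec.choose i)⟫_ℂ

/-- The trace norm, via duality with bounded operators (the correct value for trace
class operators). -/
def traceNorm (T : H →L[ℂ] H) : ℝ :=
  ⨆ B : {B : H →L[ℂ] H // ‖B‖ ≤ 1}, ‖trH (T * (B : H →L[ℂ] H))‖

/-- Hilbert-Schmidt operators. -/
def IsHilbertSchmidt (K : H →L[ℂ] H) : Prop :=
  ∀ (w : Set H) (b : HilbertBasis w ℂ H), Summable fun i => ‖K (b i)‖ ^ 2

/-- A (possibly unbounded) self-adjoint operator in `H`: a densely defined symmetric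
operator possessing everywhere-defined bounded resolvents at every non-real point. -/
structure SelfAdjointOp (H : Type*) [NormedAddCommGroup H] [InnerProductSpace ℂ H]
    [CompleteSpace H] where
  dom : Submodule ℂ H
  dense_dom : Dense (dom : Set H)
  op : dom →ₗ[ℂ] H
  symmetric : ∀ x y : dom, ⟪op x, (y : H)⟫_ℂ = ⟪(x : H), op y⟫_ℂ
  resolvent : ℂ → H →L[ℂ] H
  resolvent_mem : ∀ {z : ℂ}, z.im ≠ 0 → ∀ x : H, resolvent z x ∈ dom
  op_resolvent : ∀ {z : ℂ} (hz : z.im ≠ 0) (x : H),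
    op ⟨resolvent z x, resolvent_mem hz x⟩ - z • resolvent z x = x
  resolvent_op : ∀ {z : ℂ} (hz : z.im ≠ 0) (x : dom),
    resolvent z (op x - z • (x : H)) = x

/-- `B = A + V` for a bounded operator `V` (with `dom B = dom A`). -/
def IsSumOf (B A : SelfAdjointOp H) (V : H →L[ℂ] H) : Prop :=
  B.dom = A.dom ∧ ∀ (x : H) (hxB : x ∈ B.dom) (hxA : x ∈ A.dom),
    B.op ⟨x, hxB⟩ = A.op ⟨x, hxA⟩ + V x

/-- `R` is the (bounded, everywhere defined) resolvent `(A - z)⁻¹` of `A` at `z`. -/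
def SelfAdjointOp.IsResolventAt (A : SelfAdjointOp H) (z : ℂ) (R : H →L[ℂ] H) : Prop :=
  (∀ x : H, R x ∈ A.dom) ∧
  (∀ (x : H) (hx : R x ∈ A.dom), A.op ⟨R x, hx⟩ - z • R x = x) ∧
  (∀ x : A.dom, R (A.op x - z • (x : H)) = x)

/-- `E` is the projection-valued spectral measure of the self-adjoint operator `A`. -/
def IsSpectralMeasure (A : SelfAdjointOp H) (E : Set ℝ → H →L[ℂ] H) : Prop :=
  (∀ B : Set ℝ, MeasurableSet B → IsSelfAdjoint (E B)) ∧
  (∀ B C : Set ℝ, MeasurableSet B → MeasurableSet C → E B * E C = E (B ∩ C)) ∧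
  (E Set.univ = 1) ∧
  (∀ (f : ℕ → Set ℝ), (∀ n, MeasurableSet (f n)) → Pairwise (Function.onFun Disjoint f) →
    ∀ x : H, HasSum (fun n => E (f n) x) (E (⋃ n, f n) x)) ∧
  ∃ μ : H → Measure ℝ,
    (∀ (f : H) (B : Set ℝ), MeasurableSet B → μ f B = ENNReal.ofReal (⟪f, E B f⟫_ℂ).re) ∧
    ∀ (z : ℂ), z.im ≠ 0 → ∀ f : H,
      ⟪f, A.resolvent z f⟫_ℂ = ∫ l : ℝ, ((l : ℂ) - z)⁻¹ ∂(μ f)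

/-- Invertibility of `T` restricted to the range of the orthogonal projection `P`
(for `T` commuting with `P`), with inverse `S` supported in `ran P`. -/
def InvertibleOn (T P : H →L[ℂ] H) : Prop :=
  ∃ S : H →L[ℂ] H, S * P = S ∧ P * S = S ∧ S * (T * P) = P ∧ (P * T) * S = P

/-- The spectral projection `J₊ = (I + J)/2` onto `H₊` for a self-adjoint unitary `J`. -/
def Jplus (J : H →L[ℂ] H) : H →L[ℂ] H := ((2 : ℂ)⁻¹) • (1 + J)

/-- The spectral projection `J₋ = (I - J)/2` onto `H₋` for a self-adjoint unitary `J`. -/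
def Jminus (J : H →L[ℂ] H) : H →L[ℂ] H := ((2 : ℂ)⁻¹) • (1 - J)

/-- `Φ₊(z) = I + J₊ K* (H₀ - z)⁻¹ K J₊`, the operator on `H` inducing `Φ₊(z)` on `H₊`
(and the identity on `H₋`). -/
def PhiPlus (H0 : SelfAdjointOp H) (J K : H →L[ℂ] H) (z : ℂ) : H →L[ℂ] H :=
  1 + Jplus J * (ContinuousLinearMap.adjoint K * H0.resolvent z * K) * Jplus J

/-- `Φ̃₋(z) = I - J₋ K* (H₊ - z)⁻¹ K J₋`, the operator on `H` inducing `Φ̃₋(z)` on `H₋`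
(and the identity on `H₊`). -/
def PhiMinusT (Hp : SelfAdjointOp H) (J K : H →L[ℂ] H) (z : ℂ) : H →L[ℂ] H :=
  1 - Jminus J * (ContinuousLinearMap.adjoint K * Hp.resolvent z * K) * Jminus J

def Aop (T : H →L[ℂ] H) (t : ℝ) : H →L[ℂ] H :=
  T + ((t : ℂ) * Complex.I) • (1 : H →L[ℂ] H)

lemma c_id (w : ℂ) : (2*Complex.I)⁻¹ * (w - (starRingEnd ℂ) w) = ((w.im : ℝ) : ℂ) := by
  rw [Complex.sub_conj]
  have h2I : (2*Complex.I) ≠ 0 := mul_ne_zero two_ne_zero Complex.I_ne_zero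
  field_simp
  push_cast
  ring

lemma im_inner_nonneg {T : H →L[ℂ] H} (hT : (imPart T).IsPositive) (x : H) :
    0 ≤ (⟪x, T x⟫_ℂ).im := by
  have h := hT.2 x
  rw [ContinuousLinearMap.reApplyInnerSelf_apply] at h
  have h1 : ⟪(imPart T) x, x⟫_ℂ = (starRingEnd ℂ) ⟪x, (imPart T) x⟫_ℂ :=
    (inner_conj_symm _ _).symm
  have h2 : ⟪x, (imPart T) x⟫_ℂ = ((⟪x, T x⟫_ℂ).im : ℂ) := by
    simp only [imPart, ContinuousLinearMap.smul_apply, ContinuousLinearMap.sub_apply,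
      inner_smul_right, inner_sub_right, ContinuousLinearMap.adjoint_inner_right]
    rw [← inner_conj_symm (T x) x]
    exact c_id _
  rw [h1, h2] at h
  simpa using h

lemma lower_bound {T : H →L[ℂ] H} (hT : (imPart T).IsPositive) {t : ℝ} (ht : 0 ≤ t)
    (x : H) : t * ‖x‖ ≤ ‖Aop T t x‖ := by
  rcases eq_or_ne x 0 with rfl | hx
  · simp
  have hx' : 0 < ‖x‖ := norm_pos_iff.mpr hx
  have h2 : (⟪x, Aop T t x⟫_ℂ).im = (⟪x, T x⟫_ℂ).im + t * ‖x‖ ^ 2 := by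
    have e : ⟪x, Aop T t x⟫_ℂ = ⟪x, T x⟫_ℂ + ((t : ℂ) * Complex.I) * ((‖x‖:ℂ)^2) := by
      simp [Aop, inner_add_right, inner_smul_right, inner_self_eq_norm_sq_to_K]
    rw [e]
    simp [Complex.add_im, Complex.mul_im, Complex.mul_re]
    left
    norm_cast
  have h3 : t * ‖x‖ ^ 2 ≤ (⟪x, Aop T t x⟫_ℂ).im := by
    have := im_inner_nonneg hT x; rw [h2]; linarith
  have h4 : (⟪x, Aop T t x⟫_ℂ).im ≤ ‖x‖ * ‖Aop T t x‖ := by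
    calc (⟪x, Aop T t x⟫_ℂ).im ≤ ‖⟪x, Aop T t x⟫_ℂ‖ := by
          exact Complex.im_le_norm _
      _ ≤ ‖x‖ * ‖Aop T t x‖ := norm_inner_le_norm _ _
  have h5 := h3.trans h4
  rw [pow_two, ← mul_assoc] at h5
  exact le_of_mul_le_mul_right (by linarith [h5]) hx'

lemma apply_inverse {T : H →L[ℂ] H} (h : IsUnit T) (y : H) : T (Ring.inverse T y) = y := by
  rw [← ContinuousLinearMap.mul_apply, Ring.mul_inverse_cancel _ h, ContinuousLinearMap.one_apply]

lemma inv_norm_le {T : H →L[ℂ] H} (hT : (imPart T).IsPositive) {t : ℝ} (ht : 0 < t)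
    (h : IsUnit (Aop T t)) : ‖Ring.inverse (Aop T t)‖ ≤ t⁻¹ := by
  apply ContinuousLinearMap.opNorm_le_bound _ (by positivity)
  intro y
  have hb := lower_bound hT ht.le (Ring.inverse (Aop T t) y)
  rw [apply_inverse h y] at hb
  have : ‖Ring.inverse (Aop T t) y‖ ≤ ‖y‖ / t := (le_div_iff₀ ht).mpr (by linarith)
  simpa [div_eq_inv_mul] using this

lemma isUnit_mul_one_add {B : H →L[ℂ] H} (hB : IsUnit B) {v : H →L[ℂ] H} (hv : ‖v‖ < 1) :
    IsUnit (B * (1 + v)) := by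
  have h1 : IsUnit (1 + v) := by
    refine ⟨Units.oneSub (-v) (by simpa using hv), ?_⟩
    rw [Units.val_oneSub, sub_neg_eq_add]
  exact hB.mul h1

lemma Aop_factor {T : H →L[ℂ] H} (hB : IsUnit T) (c : ℂ) :
    T + c • (1 : H →L[ℂ] H) = T * (1 + c • Ring.inverse T) := by
  rw [mul_add, mul_one, mul_smul_comm, Ring.mul_inverse_cancel _ hB]

lemma isUnit_Aop {T : H →L[ℂ] H} (hT : (imPart T).IsPositive) (hTinv : IsUnit T) :
    ∀ t : ℝ, 0 ≤ t → IsUnit (Aop T t) := by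
  set δ : ℝ := (‖Ring.inverse T‖ + 1)⁻¹ with hδdef
  have hδ : 0 < δ := by positivity
  have base : ∀ t : ℝ, 0 ≤ t → t ≤ δ → IsUnit (Aop T t) := by
    intro t ht htδ
    rw [Aop, Aop_factor hTinv]
    apply isUnit_mul_one_add hTinv
    have h1 : ‖((t:ℂ) * Complex.I) • Ring.inverse T‖ ≤ t * ‖Ring.inverse T‖ := by
      rw [norm_smul]
      simp only [norm_mul, Complex.norm_real, Real.norm_eq_abs, Complex.norm_I, mul_one]
      rw [_root_.abs_of_nonneg ht]
    refine h1.trans_lt ?_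
    have h2 : t * ‖Ring.inverse T‖ ≤ δ * ‖Ring.inverse T‖ :=
      mul_le_mul_of_nonneg_right htδ (norm_nonneg _)
    refine h2.trans_lt ?_
    rw [hδdef]
    rw [inv_mul_lt_iff₀ (by positivity)]
    nlinarith [norm_nonneg (Ring.inverse T)]
  have step : ∀ s t : ℝ, 0 < s → IsUnit (Aop T s) → s ≤ t → t ≤ 3/2 * s → IsUnit (Aop T t) := by
    intro s t hs hus hst hts
    have key : Aop T t = Aop T s + (((t - s : ℝ) : ℂ) * Complex.I) • (1 : H →L[ℂ] H) := by
      rw [Aop, Aop, add_assoc, ← add_smul]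
      congr 1
      push_cast
      ring
    rw [key, Aop_factor hus]
    apply isUnit_mul_one_add hus
    have hinv := inv_norm_le hT hs hus
    have h1 : ‖(((t - s : ℝ):ℂ) * Complex.I) • Ring.inverse (Aop T s)‖ ≤ (t - s) * s⁻¹ := by
      rw [norm_smul]
      simp only [norm_mul, Complex.norm_real, Real.norm_eq_abs, Complex.norm_I, mul_one]
      rw [_root_.abs_of_nonneg (by linarith : (0:ℝ) ≤ t - s)]
      exact mul_le_mul_of_nonneg_left hinv (by linarith)
    refine h1.trans_lt ?_
    have hss : s * s⁻¹ = 1 := mul_inv_cancel₀ hs.ne'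
    nlinarith [inv_pos.mpr hs]
  have main : ∀ n : ℕ, ∀ t : ℝ, 0 ≤ t → t ≤ δ * (3/2)^n → IsUnit (Aop T t) := by
    intro n
    induction n with
    | zero => intro t ht h; exact base t ht (by simpa using h)
    | succ n ih =>
      intro t ht h
      by_cases hc : t ≤ δ * (3/2)^n
      · exact ih t ht hc
      · push_neg at hc
        refine step (δ * (3/2)^n) t (by positivity) (ih _ (by positivity) le_rfl) hc.le ?_
        calc t ≤ δ * (3/2)^(n+1) := h
          _ = 3/2 * (δ * (3/2)^n) := by ring
  intro t ht
  obtain ⟨n, hn⟩ := pow_unbounded_of_one_lt (t / δ) (by norm_num : (1:ℝ) < 3/2)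
  exact main n t ht (by rw [div_lt_iff₀ hδ] at hn; linarith)

lemma logIntegrand_eq_Aop (T : H →L[ℂ] H) (t : ℝ) :
    logIntegrand T t = Ring.inverse (Aop T t)
      - (((1 : ℂ) + (t : ℂ) * Complex.I)⁻¹) • (1 : H →L[ℂ] H) := rfl

lemma one_add_mul_I_ne (t : ℝ) : (1 : ℂ) + (t:ℂ) * Complex.I ≠ 0 := by
  intro h
  have := congrArg Complex.re h
  simp at this

lemma logIntegrand_factor {T : H →L[ℂ] H} (t : ℝ) (h : IsUnit (Aop T t)) :
    logIntegrand T t = Ring.inverse (Aop T t) * ((1 : H →L[ℂ] H) - T) *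
      ((((1:ℂ) + (t:ℂ)*Complex.I)⁻¹) • (1 : H →L[ℂ] H)) := by
  set c : ℂ := ((1:ℂ) + (t:ℂ)*Complex.I)⁻¹ with hcdef
  have hc : c * ((1:ℂ) + (t:ℂ)*Complex.I) = 1 := inv_mul_cancel₀ (one_add_mul_I_ne t)
  have hM : Aop T t * logIntegrand T t
      = Aop T t * (Ring.inverse (Aop T t) * ((1 : H →L[ℂ] H) - T) * (c • 1)) := by
    rw [logIntegrand_eq_Aop, mul_sub, Ring.mul_inverse_cancel _ h, ← mul_assoc, ← mul_assoc,
      Ring.mul_inverse_cancel _ h, one_mul]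
    -- ⊢ 1 - Aop T t * (c•1) = (1 - T) * (c•1)
    rw [Aop]
    simp only [add_mul, sub_mul, one_mul, mul_smul_comm, smul_mul_assoc, mul_one, smul_smul]
    have hsc : (1 : ℂ) - c * ((t:ℂ) * Complex.I) = c := by
      have hne := one_add_mul_I_ne t
      rw [hcdef]
      field_simp
      ring
    rw [smul_sub, smul_add, smul_smul]
    calc (1 : H →L[ℂ] H) - (c • T + (c * ((t:ℂ) * Complex.I)) • 1)
        = ((1 : ℂ) - c * ((t:ℂ) * Complex.I)) • (1 : H →L[ℂ] H) - c • T := by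
          rw [sub_smul, one_smul]; abel
      _ = c • (1 : H →L[ℂ] H) - c • T := by rw [hsc]
  have h2 : logIntegrand T t = Ring.inverse (Aop T t) * (Aop T t * logIntegrand T t) := by
    rw [← mul_assoc, Ring.inverse_mul_cancel _ h, one_mul]
  rw [h2, hM, ← mul_assoc, Ring.inverse_mul_cancel _ h, one_mul]

lemma norm_logIntegrand_le {T : H →L[ℂ] H} (hT : (imPart T).IsPositive) (hTinv : IsUnit T)
    {t : ℝ} (ht : 0 < t) :
    ‖logIntegrand T t‖ ≤ ‖(1 : H →L[ℂ] H) - T‖ * (t⁻¹ * t⁻¹) := by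
  have h := isUnit_Aop hT hTinv t ht.le
  rw [logIntegrand_factor t h]
  have h1 : ‖Ring.inverse (Aop T t)‖ ≤ t⁻¹ := inv_norm_le hT ht h
  have h2 : ‖(((1:ℂ) + (t:ℂ)*Complex.I)⁻¹) • (1 : H →L[ℂ] H)‖ ≤ t⁻¹ := by
    rw [norm_smul]
    have hle : t ≤ ‖(1:ℂ) + (t:ℂ)*Complex.I‖ := by
      have := Complex.abs_im_le_norm ((1:ℂ) + (t:ℂ)*Complex.I)
      simpa [_root_.abs_of_nonneg ht.le] using this
    have : ‖(((1:ℂ) + (t:ℂ)*Complex.I)⁻¹)‖ ≤ t⁻¹ := by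
      rw [norm_inv]
      exact inv_anti₀ ht hle
    calc ‖(((1:ℂ) + (t:ℂ)*Complex.I)⁻¹)‖ * ‖(1 : H →L[ℂ] H)‖
        ≤ ‖(((1:ℂ) + (t:ℂ)*Complex.I)⁻¹)‖ * 1 :=
          mul_le_mul_of_nonneg_left ContinuousLinearMap.norm_id_le (norm_nonneg _)
      _ ≤ t⁻¹ := by rw [mul_one]; exact this
  calc ‖Ring.inverse (Aop T t) * ((1 : H →L[ℂ] H) - T) * ((((1:ℂ) + (t:ℂ)*Complex.I)⁻¹) • 1)‖
      ≤ ‖Ring.inverse (Aop T t) * ((1 : H →L[ℂ] H) - T)‖ * ‖(((1:ℂ) + (t:ℂ)*Complex.I)⁻¹) • (1 : H →L[ℂ] H)‖ :=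
        norm_mul_le _ _
    _ ≤ (‖Ring.inverse (Aop T t)‖ * ‖(1 : H →L[ℂ] H) - T‖) * ‖(((1:ℂ) + (t:ℂ)*Complex.I)⁻¹) • (1 : H →L[ℂ] H)‖ :=
        mul_le_mul_of_nonneg_right (norm_mul_le _ _) (norm_nonneg _)
    _ ≤ (t⁻¹ * ‖(1 : H →L[ℂ] H) - T‖) * t⁻¹ := by
        apply mul_le_mul _ h2 (norm_nonneg _) (by positivity)
        exact mul_le_mul_of_nonneg_right h1 (norm_nonneg _)
    _ = ‖(1 : H →L[ℂ] H) - T‖ * (t⁻¹ * t⁻¹) := by ring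

lemma continuous_Aop (T : H →L[ℂ] H) : Continuous (Aop T) := by
  apply continuous_const.add
  exact (Complex.continuous_ofReal.mul continuous_const).smul continuous_const

lemma continuousOn_logIntegrand {T : H →L[ℂ] H} (hT : (imPart T).IsPositive)
    (hTinv : IsUnit T) : ContinuousOn (logIntegrand T) (Set.Ici 0) := by
  intro t ht
  apply ContinuousAt.continuousWithinAt
  have : ContinuousAt (fun s : ℝ => Ring.inverse (Aop T s)) t := by
    obtain ⟨u, hu⟩ := isUnit_Aop hT hTinv t ht
    exact (hu ▸ NormedRing.inverse_continuousAt u).comp (continuous_Aop T).continuousAt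
  apply ContinuousAt.sub this
  apply ContinuousAt.fun_smul _ continuousAt_const
  exact ((continuous_const.add (Complex.continuous_ofReal.mul continuous_const)).continuousAt).inv₀
    (one_add_mul_I_ne t)

lemma integrableOn_logIntegrand {T : H →L[ℂ] H} (hT : (imPart T).IsPositive)
    (hTinv : IsUnit T) : IntegrableOn (logIntegrand T) (Set.Ioi 0) volume := by
  rw [← Set.Ioc_union_Ioi_eq_Ioi (zero_le_one : (0:ℝ) ≤ 1)]
  apply IntegrableOn.union
  · have hco : ContinuousOn (logIntegrand T) (Set.Icc 0 1) :=
      (continuousOn_logIntegrand hT hTinv).mono (Set.Icc_subset_Ici_self)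
    exact hco.integrableOn_Icc.mono_set Set.Ioc_subset_Icc_self
  · have hmeas : AEStronglyMeasurable (logIntegrand T) (volume.restrict (Set.Ioi 1)) := by
      apply ContinuousOn.aestronglyMeasurable_of_isSeparable _ measurableSet_Ioi
        (TopologicalSpace.IsSeparable.of_separableSpace _)
      exact (continuousOn_logIntegrand hT hTinv).mono
        (fun x hx => Set.mem_Ici.mpr (le_of_lt (lt_of_lt_of_le one_pos (le_of_lt hx))))
    apply Integrable.mono' ((integrableOn_Ioi_rpow_of_lt (by norm_num : (-2:ℝ) < -1)
      one_pos).const_mul ‖(1 : H →L[ℂ] H) - T‖) hmeas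
    filter_upwards [ae_restrict_mem measurableSet_Ioi] with t ht
    have ht0 : 0 < t := lt_trans one_pos ht
    have := norm_logIntegrand_le hT hTinv ht0
    have heq : t ^ (-2:ℝ) = t⁻¹ * t⁻¹ := by
      rw [show (-2:ℝ) = -(2:ℕ) by norm_num, Real.rpow_neg ht0.le, Real.rpow_natCast]
      rw [pow_two, mul_inv]
    rw [heq]
    exact this

lemma ringInverse_smul_one (c : ℂ) :
    Ring.inverse ((c • 1) : H →L[ℂ] H) = c⁻¹ • (1 : H →L[ℂ] H) := by
  rcases eq_or_ne c 0 with rfl | hc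
  · simp
  · exact Ring.inverse_unit ⟨c • 1, c⁻¹ • 1,
      by rw [mul_smul_comm, mul_one, smul_smul, inv_mul_cancel₀ hc, one_smul],
      by rw [mul_smul_comm, mul_one, smul_smul, mul_inv_cancel₀ hc, one_smul]⟩

lemma logIntegrand_smul_one (z : ℂ) (t : ℝ) :
    logIntegrand ((z • 1) : H →L[ℂ] H) t
      = ((z + (t:ℂ) * Complex.I)⁻¹ - ((1:ℂ) + (t:ℂ) * Complex.I)⁻¹) • (1 : H →L[ℂ] H) := by
  rw [logIntegrand]
  have h : (z • 1 : H →L[ℂ] H) + ((t:ℂ) * Complex.I) • 1 = (z + (t:ℂ) * Complex.I) • 1 := by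
    rw [← add_smul]
  rw [h, ringInverse_smul_one, sub_smul]

lemma hasDerivAt_logwt (w : ℂ) (t : ℝ) (hmem : w + (t:ℂ) * Complex.I ∈ Complex.slitPlane) :
    HasDerivAt (fun s : ℝ => Complex.log (w + (s:ℂ) * Complex.I))
      ((w + (t:ℂ) * Complex.I)⁻¹ * Complex.I) t := by
  have hin : HasDerivAt (fun u : ℂ => w + u * Complex.I) Complex.I ((t:ℂ)) := by
    simpa using ((hasDerivAt_id ((t:ℂ))).mul_const Complex.I).const_add w
  have h1 : HasDerivAt (fun u : ℂ => Complex.log (w + u * Complex.I))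
      ((w + (t:ℂ) * Complex.I)⁻¹ * Complex.I) ((t:ℂ)) := by
    simpa [Function.comp_def] using
      HasDerivAt.comp ((t:ℂ)) (Complex.hasDerivAt_log hmem) hin
  exact h1.comp_ofReal

lemma neg_I_mul_sub (a b : ℂ) : -Complex.I * (a * Complex.I - b * Complex.I) = a - b := by
  have := Complex.I_sq
  linear_combination (b - a) * this

lemma scalar_key {z : ℂ} (hz : 0 < z.im) (R : ℝ) (hR : 0 ≤ R) :
    -Complex.I * ∫ t in (0:ℝ)..R, ((z + (t:ℂ) * Complex.I)⁻¹ - ((1:ℂ) + (t:ℂ) * Complex.I)⁻¹)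
      = Complex.log z - (Complex.log (z + (R:ℂ) * Complex.I)
        - Complex.log ((1:ℂ) + (R:ℂ) * Complex.I)) := by
  have huIcc : Set.uIcc (0:ℝ) R = Set.Icc 0 R := Set.uIcc_of_le hR
  have hmem1 : ∀ t : ℝ, 0 ≤ t → z + (t:ℂ) * Complex.I ∈ Complex.slitPlane := by
    intro t ht
    apply Or.inr
    simp only [Complex.add_im, Complex.mul_im, Complex.ofReal_re, Complex.I_im,
      Complex.ofReal_im, Complex.I_re, mul_zero, mul_one, zero_mul]
    positivity
  have hmem2 : ∀ t : ℝ, 0 ≤ t → (1:ℂ) + (t:ℂ) * Complex.I ∈ Complex.slitPlane := by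
    intro t ht
    apply Or.inl
    simp
  have hz1 : ∀ t : ℝ, 0 ≤ t → z + (t:ℂ) * Complex.I ≠ 0 := by
    intro t ht h
    have := congrArg Complex.im h
    simp only [Complex.add_im, Complex.mul_im, Complex.ofReal_re, Complex.I_im,
      Complex.ofReal_im, Complex.I_re, mul_zero, mul_one, zero_mul, Complex.zero_im] at this
    nlinarith
  have hderiv : ∀ t ∈ Set.uIcc (0:ℝ) R,
      HasDerivAt (fun s : ℝ => -Complex.I * (Complex.log (z + (s:ℂ) * Complex.I)
        - Complex.log ((1:ℂ) + (s:ℂ) * Complex.I)))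
      ((z + (t:ℂ) * Complex.I)⁻¹ - ((1:ℂ) + (t:ℂ) * Complex.I)⁻¹) t := by
    intro t ht
    rw [huIcc] at ht
    have h := ((hasDerivAt_logwt z t (hmem1 t ht.1)).sub
      (hasDerivAt_logwt 1 t (hmem2 t ht.1))).const_mul (-Complex.I)
    rw [neg_I_mul_sub] at h
    exact h
  have hcont : ContinuousOn
      (fun t : ℝ => (z + (t:ℂ) * Complex.I)⁻¹ - ((1:ℂ) + (t:ℂ) * Complex.I)⁻¹)
      (Set.uIcc (0:ℝ) R) := by
    rw [huIcc]
    apply ContinuousOn.sub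
    · apply ContinuousOn.inv₀
      · exact (continuous_const.add (Complex.continuous_ofReal.mul continuous_const)).continuousOn
      · intro t ht; exact hz1 t ht.1
    · apply ContinuousOn.inv₀
      · exact (continuous_const.add (Complex.continuous_ofReal.mul continuous_const)).continuousOn
      · intro t _; exact one_add_mul_I_ne t
  have hFTC := intervalIntegral.integral_eq_sub_of_hasDerivAt hderiv
    (hcont.intervalIntegrable)
  rw [hFTC]
  simp only [Complex.ofReal_zero, zero_mul, add_zero, Complex.log_one, sub_zero]
  have := Complex.I_sq
  linear_combination (Complex.log (z + R * Complex.I)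
    - Complex.log (1 + R * Complex.I) - Complex.log z) * this

lemma scalar_corr_tendsto {z : ℂ} (hz : 0 < z.im) :
    Tendsto (fun R : ℝ => Complex.log (z + (R:ℂ) * Complex.I)
      - Complex.log ((1:ℂ) + (R:ℂ) * Complex.I)) atTop (𝓝 0) := by
  have hIslit : Complex.I ∈ Complex.slitPlane := Or.inr (by simp)
  have hlog := continuousAt_clog hIslit
  have hinv : Tendsto (fun R : ℝ => ((R:ℂ))⁻¹) atTop (𝓝 0) := by
    have h1 : Tendsto (fun R : ℝ => R⁻¹) atTop (𝓝 0) := tendsto_inv_atTop_zero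
    have h2 := (Complex.continuous_ofReal.tendsto 0).comp h1
    simpa [Function.comp_def, Complex.ofReal_inv] using h2
  have t1 : Tendsto (fun R : ℝ => z * ((R:ℂ))⁻¹ + Complex.I) atTop (𝓝 Complex.I) := by
    have := (hinv.const_mul z).add_const Complex.I
    simpa using this
  have t2 : Tendsto (fun R : ℝ => ((R:ℂ))⁻¹ + Complex.I) atTop (𝓝 Complex.I) := by
    have := hinv.add_const Complex.I
    simpa using this
  have lim : Tendsto (fun R : ℝ => Complex.log (z * ((R:ℂ))⁻¹ + Complex.I)
      - Complex.log (((R:ℂ))⁻¹ + Complex.I)) atTop (𝓝 0) := by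
    have := (hlog.tendsto.comp t1).sub (hlog.tendsto.comp t2)
    simpa using this
  apply lim.congr'
  filter_upwards [eventually_gt_atTop (0:ℝ)] with R hR
  have hRne : ((R:ℂ)) ≠ 0 := Complex.ofReal_ne_zero.mpr hR.ne'
  have ne1 : z * ((R:ℂ))⁻¹ + Complex.I ≠ 0 := by
    intro h
    have := congrArg Complex.im h
    simp only [Complex.add_im, Complex.mul_im, Complex.I_im, Complex.zero_im] at this
    rw [Complex.inv_im, Complex.inv_re] at this
    simp only [Complex.ofReal_re, Complex.ofReal_im] at this
    have hsq : Complex.normSq (R:ℂ) = R^2 := by simp [Complex.normSq_ofReal, pow_two]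
    rw [hsq] at this
    have hR2 : (0:ℝ) < R^2 := by positivity
    norm_num at this
    nlinarith [mul_pos hz (div_pos hR hR2)]
  have ne2 : ((R:ℂ))⁻¹ + Complex.I ≠ 0 := by
    intro h
    have := congrArg Complex.im h
    rw [Complex.add_im, Complex.inv_im] at this
    simp only [Complex.I_im, Complex.ofReal_im, Complex.zero_im] at this
    simp at this
  have e1 : z + (R:ℂ) * Complex.I = (R:ℝ) * (z * ((R:ℂ))⁻¹ + Complex.I) := by
    push_cast
    field_simp
  have e2 : (1:ℂ) + (R:ℂ) * Complex.I = (R:ℝ) * (((R:ℂ))⁻¹ + Complex.I) := by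
    push_cast
    field_simp
  rw [e1, e2, Complex.log_ofReal_mul hR ne1, Complex.log_ofReal_mul hR ne2]
  ring

lemma scalar_tendsto {z : ℂ} (hz : 0 < z.im) :
    Tendsto (fun R : ℝ => -Complex.I * ∫ t in (0:ℝ)..R,
        ((z + (t:ℂ) * Complex.I)⁻¹ - ((1:ℂ) + (t:ℂ) * Complex.I)⁻¹))
      atTop (𝓝 (Complex.log z)) := by
  have h := tendsto_const_nhds (x := Complex.log z) (f := atTop (α := ℝ))
  have hmain := h.sub (scalar_corr_tendsto hz)
  rw [sub_zero] at hmain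
  apply hmain.congr'
  filter_upwards [eventually_ge_atTop (0:ℝ)] with R hR
  exact (scalar_key hz R hR).symm

/-- Lemma 2.4 (i), (ii): for a dissipative boundedly invertible `T`, the improper Riemann
integral defining `log T` converges in operator norm; for `T = z·I` with `Im z > 0` its
value is `(log z)·I` with the principal branch of the logarithm. -/
theorem opLog_converges [SeparableSpace H]
    (T : H →L[ℂ] H) (hT : (imPart T).IsPositive) (hTinv : IsUnit T) :
    ∃ L : H →L[ℂ] H,
      Tendsto (fun R : ℝ => (-Complex.I) • ∫ t in (0:ℝ)..R, logIntegrand T t) atTop (𝓝 L) ∧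
      ∀ z : ℂ, 0 < z.im → T = z • (1 : H →L[ℂ] H) →
        L = Complex.log z • (1 : H →L[ℂ] H) := by
  have htend : Tendsto (fun R : ℝ => (-Complex.I) • ∫ t in (0:ℝ)..R, logIntegrand T t) atTop
      (𝓝 ((-Complex.I) • ∫ t in Set.Ioi (0:ℝ), logIntegrand T t)) :=
    (MeasureTheory.intervalIntegral_tendsto_integral_Ioi 0
      (integrableOn_logIntegrand hT hTinv) tendsto_id).const_smul (-Complex.I)
  refine ⟨_, htend, ?_⟩
  intro z hz hTz
  subst hTz
  have h2 : Tendsto (fun R : ℝ =>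
        (-Complex.I) • ∫ t in (0:ℝ)..R, logIntegrand ((z • 1) : H →L[ℂ] H) t)
      atTop (𝓝 (Complex.log z • (1 : H →L[ℂ] H))) := by
    have hs := (scalar_tendsto hz).smul_const (1 : H →L[ℂ] H)
    apply hs.congr
    intro R
    rw [← smul_smul]
    congr 1
    rw [← intervalIntegral.integral_smul_const]
    apply intervalIntegral.integral_congr
    intro t _
    exact (logIntegrand_smul_one z t).symm
  exact tendsto_nhds_unique htend h2


end SpectralShift
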